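/- Let m > 2, L > 0, ν > 0, and let G ∈ C¹(ℝ) be even with G'(y) < 0 for all y > 0 and with G' nonincreasing on (−2L, 2L) (i.e. G concave on (−2L,2L)). Let ρ ∈ C¹([0,L]) ∩ C²((0,L)) be positive on [0,L) with ρ'(x) < 0 for all x ∈ (0,L), and suppose ν (m−1) ρ(x)^{m−2} ρ'(x) = ℋ_L[ρ'](x) for all x ∈ [0,L]. Then ρ''(x) < 0 for all x ∈ (0,L), i.e. ρ is strictly concave on the interior of its support. -/

import Mathlib

open Set MeasureTheory

/-- The operator `ℋ_L[u](x) = ∫₀^L [G(x−y) − G(x+y)] u(y) dy`. -/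
noncomputable def Hop (G : ℝ → ℝ) (L : ℝ) (u : ℝ → ℝ) (x : ℝ) : ℝ :=
  ∫ y in (0:ℝ)..L, (G (x - y) - G (x + y)) * u y

/-- Strict concavity of stationary states for `m > 2` when the kernel `G` is concave
on `(−2L, 2L)`: if `ρ ∈ C¹([0,L]) ∩ C²((0,L))` is positive on `[0,L)` with `ρ' < 0`
on `(0,L)` and solves the differentiated stationary-state equation
`ν (m−1) ρ^{m−2} ρ' = ℋ_L[ρ']`, then `ρ'' < 0` on `(0,L)`. -/
theorem strictly_concave_on_support
    (m L ν : ℝ) (hm : 2 < m) (hL : 0 < L) (hν : 0 < ν)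
    (G : ℝ → ℝ) (hG : ContDiff ℝ 1 G) (hGeven : ∀ x, G (-x) = G x)
    (hG'neg : ∀ y : ℝ, 0 < y → deriv G y < 0)
    (hG'mono : AntitoneOn (deriv G) (Ioo (-(2*L)) (2*L)))
    (ρ ρ' ρ'' : ℝ → ℝ)
    (hρ : ∀ x ∈ Icc (0:ℝ) L, HasDerivWithinAt ρ (ρ' x) (Icc 0 L) x)
    (hρ'c : ContinuousOn ρ' (Icc 0 L))
    (hρ' : ∀ x ∈ Ioo (0:ℝ) L, HasDerivAt ρ' (ρ'' x) x)
    (hρpos : ∀ x ∈ Ico (0:ℝ) L, 0 < ρ x)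
    (hρ'neg : ∀ x ∈ Ioo (0:ℝ) L, ρ' x < 0)
    (heq : ∀ x ∈ Icc (0:ℝ) L,
      ν * (m - 1) * ρ x ^ (m - 2) * ρ' x = Hop G L ρ' x) :
    ∀ x ∈ Ioo (0:ℝ) L, ρ'' x < 0 := by
  intro x₀ hx₀
  obtain ⟨hx0, hxL⟩ := hx₀
  have hGdiff : Differentiable ℝ G := hG.differentiable one_ne_zero
  have hG'cont : Continuous (deriv G) := hG.continuous_deriv le_rfl
  -- bounds for the kernel derivative and for ρ'
  obtain ⟨C, hC⟩ := (isCompact_Icc (a := -(2*L)) (b := 2*L)).exists_bound_of_continuousOn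
    hG'cont.continuousOn
  obtain ⟨M, hM⟩ := (isCompact_Icc (a := (0:ℝ)) (b := L)).exists_bound_of_continuousOn hρ'c
  have hCnn : 0 ≤ C := le_trans (norm_nonneg _) (hC 0 ⟨by linarith, by linarith⟩)
  have hMnn : 0 ≤ M := le_trans (norm_nonneg _) (hM 0 ⟨le_rfl, hL.le⟩)
  set ε : ℝ := min x₀ (L - x₀) with hεdef
  have hεpos : 0 < ε := lt_min hx0 (by linarith)
  have hball : ∀ x ∈ Metric.ball x₀ ε, 0 < x ∧ x < L := by
    intro x hx
    rw [Metric.mem_ball, Real.dist_eq, abs_lt] at hx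
    have h1 : ε ≤ x₀ := min_le_left _ _
    have h2 : ε ≤ L - x₀ := min_le_right _ _
    exact ⟨by linarith [hx.1], by linarith [hx.2]⟩
  have hIoc : Set.uIoc (0:ℝ) L = Ioc 0 L := uIoc_of_le hL.le
  -- continuity of y ↦ G(x-y) - G(x+y)
  have hker : ∀ x : ℝ, Continuous fun t : ℝ => G (x - t) - G (x + t) := fun x =>
    ((hG.continuous.comp (continuous_const.sub continuous_id)).sub
      (hG.continuous.comp (continuous_const.add continuous_id)))
  -- differentiate under the integral sign
  have key := intervalIntegral.hasDerivAt_integral_of_dominated_loc_of_deriv_le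
    (μ := volume) (a := (0:ℝ)) (b := L) (x₀ := x₀)
    (F := fun x t => (G (x - t) - G (x + t)) * ρ' t)
    (F' := fun x t => (deriv G (x - t) - deriv G (x + t)) * ρ' t)
    (bound := fun _ => (C + C) * M) (Metric.ball_mem_nhds x₀ hεpos)
    (Filter.Eventually.of_forall fun x => by
      rw [hIoc]
      exact ((hker x).continuousOn.mul
        (hρ'c.mono Ioc_subset_Icc_self)).aestronglyMeasurable measurableSet_Ioc)
    (((hker x₀).continuousOn.mul (by rwa [uIcc_of_le hL.le])).intervalIntegrable)
    (by
      rw [hIoc]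
      exact ((((hG'cont.comp (continuous_const.sub continuous_id)).sub
        (hG'cont.comp (continuous_const.add continuous_id)))).continuousOn.mul
        (hρ'c.mono Ioc_subset_Icc_self)).aestronglyMeasurable measurableSet_Ioc)
    (Filter.Eventually.of_forall fun t ht => by
      rw [hIoc] at ht
      intro x hx
      obtain ⟨hx1, hx2⟩ := hball x hx
      have h1 : x - t ∈ Icc (-(2*L)) (2*L) :=
        ⟨by linarith [ht.1, ht.2], by linarith [ht.1, ht.2]⟩
      have h2 : x + t ∈ Icc (-(2*L)) (2*L) :=
        ⟨by linarith [ht.1, ht.2], by linarith [ht.1, ht.2]⟩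
      have hρ'b : ‖ρ' t‖ ≤ M := hM t ⟨ht.1.le, ht.2⟩
      calc ‖(deriv G (x - t) - deriv G (x + t)) * ρ' t‖
          = ‖deriv G (x - t) - deriv G (x + t)‖ * ‖ρ' t‖ := norm_mul _ _
        _ ≤ (C + C) * M := by
            apply mul_le_mul _ hρ'b (norm_nonneg _) (by linarith)
            calc ‖deriv G (x - t) - deriv G (x + t)‖
                ≤ ‖deriv G (x - t)‖ + ‖deriv G (x + t)‖ := norm_sub_le _ _
              _ ≤ C + C := add_le_add (hC _ h1) (hC _ h2))
    intervalIntegrable_const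
    (Filter.Eventually.of_forall fun t _ => by
      intro x hx
      have hg1 : HasDerivAt (fun x : ℝ => G (x - t)) (deriv G (x - t)) x := by
        simpa [Function.comp_def] using (hGdiff (x - t)).hasDerivAt.comp x ((hasDerivAt_id x).sub_const t)
      have hg2 : HasDerivAt (fun x : ℝ => G (x + t)) (deriv G (x + t)) x := by
        simpa [Function.comp_def] using (hGdiff (x + t)).hasDerivAt.comp x ((hasDerivAt_id x).add_const t)
      exact (hg1.sub hg2).mul_const (ρ' t))
  have hHderiv : HasDerivAt (Hop G L ρ')
      (∫ t in (0:ℝ)..L, (deriv G (x₀ - t) - deriv G (x₀ + t)) * ρ' t) x₀ := key.2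
  -- derivative of the left-hand side
  have hρx : HasDerivAt ρ (ρ' x₀) x₀ :=
    (hρ x₀ ⟨hx0.le, hxL.le⟩).hasDerivAt (Icc_mem_nhds hx0 hxL)
  have hρposx : 0 < ρ x₀ := hρpos x₀ ⟨hx0.le, hxL⟩
  have hrpow : HasDerivAt (fun x => ρ x ^ (m - 2))
      (ρ' x₀ * (m - 2) * ρ x₀ ^ (m - 2 - 1)) x₀ :=
    hρx.rpow_const (Or.inl hρposx.ne')
  have hρ'x : HasDerivAt ρ' (ρ'' x₀) x₀ := hρ' x₀ ⟨hx0, hxL⟩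
  have hprod : HasDerivAt (fun x => ν * (m - 1) * ρ x ^ (m - 2) * ρ' x)
      (ν * (m - 1) * (ρ' x₀ * (m - 2) * ρ x₀ ^ (m - 2 - 1) * ρ' x₀
        + ρ x₀ ^ (m - 2) * ρ'' x₀)) x₀ := by
    have := ((hrpow.mul hρ'x).const_mul (ν * (m - 1)))
    simpa [mul_assoc] using this
  -- the two functions agree near x₀
  have hEq : (fun x => ν * (m - 1) * ρ x ^ (m - 2) * ρ' x) =ᶠ[nhds x₀] Hop G L ρ' := by
    filter_upwards [Ioo_mem_nhds hx0 hxL] with x hx using heq x (Ioo_subset_Icc_self hx)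
  have hLHS : HasDerivAt (fun x => ν * (m - 1) * ρ x ^ (m - 2) * ρ' x)
      (∫ t in (0:ℝ)..L, (deriv G (x₀ - t) - deriv G (x₀ + t)) * ρ' t) x₀ :=
    hHderiv.congr_of_eventuallyEq hEq
  have hAeq : ν * (m - 1) * (ρ' x₀ * (m - 2) * ρ x₀ ^ (m - 2 - 1) * ρ' x₀
        + ρ x₀ ^ (m - 2) * ρ'' x₀)
      = ∫ t in (0:ℝ)..L, (deriv G (x₀ - t) - deriv G (x₀ + t)) * ρ' t :=
    hprod.unique hLHS
  -- the integral is nonpositive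
  have hDnp : (∫ t in (0:ℝ)..L, (deriv G (x₀ - t) - deriv G (x₀ + t)) * ρ' t) ≤ 0 := by
    rw [intervalIntegral.integral_of_le hL.le, integral_Ioc_eq_integral_Ioo]
    apply setIntegral_nonpos measurableSet_Ioo
    intro y hy
    obtain ⟨hy1, hy2⟩ := hy
    have h1 : x₀ - y ∈ Ioo (-(2*L)) (2*L) := ⟨by linarith, by linarith⟩
    have h2 : x₀ + y ∈ Ioo (-(2*L)) (2*L) := ⟨by linarith, by linarith⟩
    have hmono : deriv G (x₀ + y) ≤ deriv G (x₀ - y) := hG'mono h1 h2 (by linarith)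
    exact mul_nonpos_of_nonneg_of_nonpos (by linarith) (hρ'neg y ⟨hy1, hy2⟩).le
  rw [← hAeq] at hDnp
  -- conclude
  have hb : 0 < ρ x₀ ^ (m - 2) := Real.rpow_pos_of_pos hρposx _
  have ha : 0 < ρ x₀ ^ (m - 2 - 1) := Real.rpow_pos_of_pos hρposx _
  have hs : ρ' x₀ < 0 := hρ'neg x₀ ⟨hx0, hxL⟩
  have h1 : 0 < ν * (m - 1) := mul_pos hν (by linarith)
  have hss : 0 < ρ' x₀ * ρ' x₀ := mul_pos_of_neg_of_neg hs hs
  by_contra hcon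
  push_neg at hcon
  have h2 : 0 < ρ' x₀ * (m - 2) * ρ x₀ ^ (m - 2 - 1) * ρ' x₀ + ρ x₀ ^ (m - 2) * ρ'' x₀ := by
    nlinarith [mul_pos ha hss, mul_nonneg hb.le hcon]
  nlinarith [mul_pos h1 h2]
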